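/- arXiv:2204.05033 — 2 statements merged into one kernel-verified Lean document; each statement's English description precedes it below -/
import Mathlib

section
/- Let Z_1, Z_2, ... be i.i.d. uniform on A^k and let E ⊆ P(A^k) be any set of distributions with minimum divergence D* = min_{W ∈ E ∩ P_ℓ} D(W‖U_k) attained among ℓ-types. Then for any δ > 0, the conditional probability that the empirical type P̂_{Z_1^ℓ} satisfies D(P̂_{Z_1^ℓ}‖U_k) > D_0 + 2δ, given P̂_{Z_1^ℓ} ∈ E, is at most (ℓ+1)^{2m^k} e^{−ℓδ}, provided there exists an ℓ-type W_0 ∈ E with D(W_0‖U_k) ≤ D_0 + δ. -/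
open scoped Classical BigOperators

/-- The empirical PMF on `B` of a string `z ∈ B^ℓ`. -/
noncomputable def empPMF {B : Type*} [Fintype B] (ℓ : ℕ) (z : Fin ℓ → B) (w : B) : ℝ :=
  ((Finset.univ.filter (fun t : Fin ℓ => z t = w)).card : ℝ) / ℓ

/-- Relative entropy (natural log), finite-sum form. -/
noncomputable def relEnt {B : Type*} [Fintype B] (P Q : B → ℝ) : ℝ :=
  ∑ b, P b * Real.log (P b / Q b)

set_option linter.unusedSectionVars false

namespace CVHelp

/-- Key factorial bound: `b! * b^a ≤ a! * b^b`. -/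
lemma factorial_pow_le (a b : ℕ) : b.factorial * b ^ a ≤ a.factorial * b ^ b := by
  rcases le_total a b with h | h
  · have key : ∀ d, (a + d).factorial ≤ a.factorial * (a + d) ^ d := by
      intro d
      induction d with
      | zero => simp
      | succ n ih =>
        have h1 : (a + (n+1)).factorial = (a + n + 1) * (a + n).factorial := by
          rw [show a + (n+1) = (a+n) + 1 by ring, Nat.factorial_succ]
        rw [h1]
        calc (a + n + 1) * (a + n).factorial
            ≤ (a + n + 1) * (a.factorial * (a + n) ^ n) := Nat.mul_le_mul_left _ ih
          _ ≤ (a + n + 1) * (a.factorial * (a + (n+1)) ^ n) := by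
              refine Nat.mul_le_mul_left _ (Nat.mul_le_mul_left _ (Nat.pow_le_pow_left ?_ n))
              omega
          _ = a.factorial * (a + (n+1)) ^ (n+1) := by ring
    obtain ⟨d, rfl⟩ := Nat.exists_eq_add_of_le h
    calc (a + d).factorial * (a + d) ^ a
        ≤ (a.factorial * (a + d) ^ d) * (a + d) ^ a := Nat.mul_le_mul_right _ (key d)
      _ = a.factorial * (a + d) ^ (a + d) := by rw [mul_assoc, ← pow_add]; ring_nf
  · have key : ∀ d, b.factorial * b ^ d ≤ (b + d).factorial := by
      intro d
      induction d with
      | zero => simp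
      | succ n ih =>
        have h1 : (b + (n+1)).factorial = (b + n + 1) * (b + n).factorial := by
          rw [show b + (n+1) = (b+n) + 1 by ring, Nat.factorial_succ]
        rw [h1]
        calc b.factorial * b ^ (n+1) = b * (b.factorial * b ^ n) := by ring
          _ ≤ (b + n + 1) * (b.factorial * b ^ n) := Nat.mul_le_mul_right _ (by omega)
          _ ≤ (b + n + 1) * (b + n).factorial := Nat.mul_le_mul_left _ ih
    obtain ⟨d, rfl⟩ := Nat.exists_eq_add_of_le h
    calc b.factorial * b ^ (b + d) = (b.factorial * b ^ d) * b ^ b := by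
          rw [mul_assoc, ← pow_add]; ring_nf
      _ ≤ (b + d).factorial * b ^ b := Nat.mul_le_mul_right _ (key d)

variable {B : Type*} [Fintype B]

/-- Count of occurrences of `w` in the string `z`. -/
noncomputable def cnt (ℓ : ℕ) (z : Fin ℓ → B) (w : B) : ℕ :=
  (Finset.univ.filter (fun t : Fin ℓ => z t = w)).card

lemma sum_cnt (ℓ : ℕ) (z : Fin ℓ → B) : ∑ w, cnt ℓ z w = ℓ := by
  classical
  have := Finset.card_eq_sum_card_fiberwise (s := (Finset.univ : Finset (Fin ℓ)))
    (t := (Finset.univ : Finset B)) (f := z) (fun x _ => Finset.mem_univ (z x))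
  simp only [Finset.card_univ, Fintype.card_fin] at this
  exact this.symm

lemma cnt_le (ℓ : ℕ) (z : Fin ℓ → B) (w : B) : cnt ℓ z w ≤ ℓ := by
  rw [cnt]
  simpa using Finset.card_filter_le (Finset.univ : Finset (Fin ℓ)) _

lemma prod_comp_cnt (ℓ : ℕ) (z : Fin ℓ → B) (g : B → ℝ) :
    ∏ t, g (z t) = ∏ w, g w ^ cnt ℓ z w := by
  classical
  rw [← Finset.prod_fiberwise_of_maps_to (fun x _ => Finset.mem_univ (z x)) (fun t => g (z t))]
  refine Finset.prod_congr rfl fun w _ => ?_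
  rw [cnt, ← Finset.prod_const]
  exact Finset.prod_congr rfl fun t ht => by rw [(Finset.mem_filter.mp ht).2]

lemma cnt_card_subtype (ℓ : ℕ) (z : Fin ℓ → B) (w : B) :
    Fintype.card {t // z t = w} = cnt ℓ z w := by
  classical
  rw [cnt]; exact Fintype.card_subtype _

lemma exists_perm {ℓ : ℕ} {z z' : Fin ℓ → B} (h : cnt ℓ z = cnt ℓ z') :
    ∃ σ : Equiv.Perm (Fin ℓ), z ∘ σ = z' := by
  classical
  have e : ∀ w, {t // z' t = w} ≃ {t // z t = w} := fun w =>
    Fintype.equivOfCardEq (by rw [cnt_card_subtype, cnt_card_subtype, h])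
  refine ⟨((Equiv.sigmaFiberEquiv z').symm.trans
      ((Equiv.sigmaCongrRight e).trans (Equiv.sigmaFiberEquiv z))), ?_⟩
  funext t
  exact (e (z' t) ⟨t, rfl⟩).2

lemma cnt_comp_perm (ℓ : ℕ) (z : Fin ℓ → B) (σ : Equiv.Perm (Fin ℓ)) :
    cnt ℓ (z ∘ σ) = cnt ℓ z := by
  classical
  funext w
  exact Finset.card_bij (fun t _ => σ t)
    (fun t ht => by simpa using (Finset.mem_filter.mp ht).2)
    (fun a ha b hb hab => σ.injective hab)
    (fun t ht => ⟨σ.symm t, by simpa using (Finset.mem_filter.mp ht).2, by simp⟩)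

/-- The class of strings with counts `c`. -/
noncomputable def typeCls (ℓ : ℕ) (c : B → ℕ) : Finset (Fin ℓ → B) :=
  Finset.univ.filter (fun z : Fin ℓ → B => cnt ℓ z = c)

/-- The number of strings with the same type as `z₀`, times the product of
factorials of the counts, equals `ℓ!`. -/
lemma card_typeclass (ℓ : ℕ) (z₀ : Fin ℓ → B) :
    (typeCls ℓ (cnt ℓ z₀)).card * ∏ w, (cnt ℓ z₀ w).factorial = ℓ.factorial := by
  classical
  have hstab : ∀ z : Fin ℓ → B, cnt ℓ z = cnt ℓ z₀ →
      (Finset.univ.filter (fun σ : Equiv.Perm (Fin ℓ) => z₀ ∘ σ = z)).card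
        = ∏ w, (cnt ℓ z₀ w).factorial := by
    intro z hz
    obtain ⟨τ, hτ⟩ := exists_perm hz.symm
    have hbij : (Finset.univ.filter (fun σ : Equiv.Perm (Fin ℓ) => z₀ ∘ σ = z)).card
        = (Finset.univ.filter (fun σ : Equiv.Perm (Fin ℓ) => z₀ ∘ σ = z₀)).card := by
      refine Finset.card_bij' (fun σ _ => τ.symm.trans σ) (fun σ _ => τ.trans σ) ?_ ?_ ?_ ?_
      · intro σ hσ
        simp only [Finset.mem_filter, Finset.mem_univ, true_and] at hσ ⊢
        funext t
        have h1 : z₀ (σ (τ.symm t)) = z (τ.symm t) := congrFun hσ (τ.symm t)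
        have h2 : z (τ.symm t) = z₀ t := by
          conv_rhs => rw [show t = τ (τ.symm t) by simp]
          exact (congrFun hτ (τ.symm t)).symm
        simpa using h1.trans h2
      · intro σ hσ
        simp only [Finset.mem_filter, Finset.mem_univ, true_and] at hσ ⊢
        funext t
        have h1 : z₀ (σ (τ t)) = z₀ (τ t) := congrFun hσ (τ t)
        simpa using h1.trans (congrFun hτ t)
      · intro σ _; ext t; simp
      · intro σ _; ext t; simp
    rw [hbij]
    have h3 := DomMulAct.stabilizer_card (α := Fin ℓ) (ι := B) z₀
    rw [Fintype.card_subtype] at h3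
    rw [h3]
    exact Finset.prod_congr rfl fun w _ => by rw [cnt_card_subtype]
  have hcount : (Fintype.card (Equiv.Perm (Fin ℓ)))
      = ∑ z ∈ typeCls ℓ (cnt ℓ z₀),
          (Finset.univ.filter (fun σ : Equiv.Perm (Fin ℓ) => z₀ ∘ σ = z)).card := by
    rw [← Finset.card_univ]
    exact Finset.card_eq_sum_card_fiberwise (fun σ _ => by
      simp only [typeCls, Finset.mem_coe, Finset.mem_filter, Finset.mem_univ, true_and]
      exact cnt_comp_perm ℓ z₀ σ)
  rw [Fintype.card_perm, Fintype.card_fin] at hcount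
  rw [hcount, Finset.sum_congr rfl (fun z hz => hstab z (by
      simpa [typeCls] using (Finset.mem_filter.mp hz).2)),
    Finset.sum_const, smul_eq_mul]

/-- Any count function summing to `ℓ` is realized by a string. -/
lemma exists_string {ℓ : ℕ} (c : B → ℕ) (hc : ∑ w, c w = ℓ) :
    ∃ z : Fin ℓ → B, cnt ℓ z = c := by
  classical
  have hcard : Fintype.card (Σ w : B, Fin (c w)) = Fintype.card (Fin ℓ) := by
    simp [Fintype.card_sigma, hc]
  obtain ⟨e⟩ := Fintype.card_eq.mp hcard
  refine ⟨fun t => (e.symm t).1, ?_⟩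
  funext w
  rw [cnt, ← Fintype.card_subtype]
  have h2 : Fintype.card {t : Fin ℓ // (e.symm t).1 = w}
      = Fintype.card {s : Σ w : B, Fin (c w) // s.1 = w} :=
    Fintype.card_congr (e.symm.subtypeEquiv fun t => Iff.rfl)
  rw [h2,
    Fintype.card_congr (Equiv.subtypeSigmaEquiv (fun w' : B => Fin (c w')) (fun w' => w' = w))]
  simp
  exact congrArg c (Subtype.prop (default : {w' : B // w' = w}))

lemma card_typeclass' {ℓ : ℕ} {c : B → ℕ} (hc : ∑ w, c w = ℓ) :
    (typeCls ℓ c).card * ∏ w, (c w).factorial = ℓ.factorial := by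
  obtain ⟨z, rfl⟩ := exists_string c hc
  exact card_typeclass ℓ z

/-- Sum over all strings of the product of an arbitrary pmf equals 1. -/
lemma sum_prod_eq_one {ℓ : ℕ} (P : B → ℝ) (hP : ∑ w, P w = 1) :
    ∑ z : Fin ℓ → B, ∏ t, P (z t) = 1 := by
  classical
  rw [← Fintype.prod_sum (fun _ : Fin ℓ => P)]
  simp [hP]

/-- `typeCls` upper bound: `|T(c)| ⬝ ∏ P(w)^{c w} ≤ 1` for the empirical pmf `P` of `c`. -/
lemma typeCls_mul_weight_le_one {ℓ : ℕ} {c : B → ℕ} (hℓ : 0 < ℓ) (hc : ∑ w, c w = ℓ) :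
    ((typeCls ℓ c).card : ℝ) * ∏ w, ((c w : ℝ) / ℓ) ^ (c w) ≤ 1 := by
  classical
  set P : B → ℝ := fun w => (c w : ℝ) / ℓ with hPdef
  have hP1 : ∑ w, P w = 1 := by
    rw [hPdef, ← Finset.sum_div]
    rw [show ∑ w, ((c w : ℝ)) = ((∑ w, c w : ℕ) : ℝ) by push_cast; ring, hc]
    exact div_self (by positivity)
  have hkey := sum_prod_eq_one (ℓ := ℓ) P hP1
  have hsub : ∑ z ∈ typeCls ℓ c, ∏ t, P (z t) ≤ 1 := by
    rw [← hkey]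
    refine Finset.sum_le_sum_of_subset_of_nonneg (Finset.subset_univ _) ?_
    intro z _ _
    exact Finset.prod_nonneg fun t _ => by positivity
  calc ((typeCls ℓ c).card : ℝ) * ∏ w, P w ^ (c w)
      = ∑ z ∈ typeCls ℓ c, ∏ w, P w ^ (c w) := by rw [Finset.sum_const, nsmul_eq_mul]
    _ = ∑ z ∈ typeCls ℓ c, ∏ t, P (z t) := by
        refine Finset.sum_congr rfl fun z hz => ?_
        have hcz : cnt ℓ z = c := by simpa [typeCls] using (Finset.mem_filter.mp hz).2
        rw [prod_comp_cnt ℓ z P, hcz]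
    _ ≤ 1 := hsub

/-- The class of `c'` maximizes `c'`-weighted class size. -/
lemma typeCls_weighted_max {ℓ : ℕ} (hℓ : 0 < ℓ) {c c' : B → ℕ}
    (hc : ∑ w, c w = ℓ) (hc' : ∑ w, c' w = ℓ) :
    ((typeCls ℓ c).card : ℝ) * ∏ w, ((c' w : ℝ) / ℓ) ^ (c w)
      ≤ ((typeCls ℓ c').card : ℝ) * ∏ w, ((c' w : ℝ) / ℓ) ^ (c' w) := by
  classical
  have key : (typeCls ℓ c).card * ∏ w, (c' w) ^ (c w)
      ≤ (typeCls ℓ c').card * ∏ w, (c' w) ^ (c' w) := by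
    set F := ∏ w, (c w).factorial with hF
    set F' := ∏ w, (c' w).factorial with hF'
    have h1 : (typeCls ℓ c).card * F = ℓ.factorial := card_typeclass' hc
    have h2 : (typeCls ℓ c').card * F' = ℓ.factorial := card_typeclass' hc'
    have hprod : F' * ∏ w, (c' w) ^ (c w) ≤ F * ∏ w, (c' w) ^ (c' w) := by
      rw [hF, hF', ← Finset.prod_mul_distrib, ← Finset.prod_mul_distrib]
      exact Finset.prod_le_prod' fun w _ => factorial_pow_le (c w) (c' w)
    have hposF : 0 < F * F' := by
      apply Nat.mul_pos <;> exact Finset.prod_pos fun w _ => Nat.factorial_pos _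
    refine Nat.le_of_mul_le_mul_right ?_ hposF
    calc (typeCls ℓ c).card * (∏ w, (c' w) ^ (c w)) * (F * F')
        = ((typeCls ℓ c).card * F) * (F' * ∏ w, (c' w) ^ (c w)) := by ring
      _ = ℓ.factorial * (F' * ∏ w, (c' w) ^ (c w)) := by rw [h1]
      _ ≤ ℓ.factorial * (F * ∏ w, (c' w) ^ (c' w)) := Nat.mul_le_mul_left _ hprod
      _ = ((typeCls ℓ c').card * F') * (F * ∏ w, (c' w) ^ (c' w)) := by rw [h2]
      _ = (typeCls ℓ c').card * (∏ w, (c' w) ^ (c' w)) * (F * F') := by ring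
  have hL : (0 : ℝ) < (ℓ : ℝ) ^ ℓ := by positivity
  have hrw : ∀ c'' : B → ℕ, (∑ w, c'' w = ℓ) →
      ∏ w, ((c' w : ℝ) / ℓ) ^ (c'' w)
        = (∏ w, ((c' w : ℝ)) ^ (c'' w)) / (ℓ : ℝ) ^ ℓ := by
    intro c'' hc''
    rw [eq_div_iff (ne_of_gt hL)]
    rw [← hc'', ← Finset.prod_pow_eq_pow_sum, ← Finset.prod_mul_distrib]
    exact Finset.prod_congr rfl fun w _ => by rw [div_pow, div_mul_cancel₀]; exact pow_ne_zero _ (Nat.cast_ne_zero.mpr (by rw [hc'']; omega))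
  rw [hrw c hc, hrw c' hc', mul_div_assoc', mul_div_assoc', div_le_div_iff_of_pos_right hL]
  exact_mod_cast key

/-- weight of a count vector as an exponential of (minus) its entropy. -/
lemma weight_eq_exp {ℓ : ℕ} (hℓ : 0 < ℓ) (c : B → ℕ) :
    ∏ w, ((c w : ℝ) / ℓ) ^ (c w)
      = Real.exp ((ℓ : ℝ) * ∑ w, ((c w : ℝ) / ℓ) * Real.log ((c w : ℝ) / ℓ)) := by
  rw [Finset.mul_sum, Real.exp_sum]
  refine Finset.prod_congr rfl fun w _ => ?_
  rcases Nat.eq_zero_or_pos (c w) with h | h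
  · simp [h]
  · have hℓ' : (ℓ : ℝ) ≠ 0 := Nat.cast_ne_zero.mpr hℓ.ne'
    have hx : (0:ℝ) < (c w : ℝ) / ℓ :=
      div_pos (Nat.cast_pos.mpr h) (Nat.cast_pos.mpr hℓ)
    rw [show (ℓ:ℝ) * (((c w : ℝ)/ℓ) * Real.log ((c w : ℝ)/ℓ))
        = (c w : ℝ) * Real.log ((c w : ℝ)/ℓ) by field_simp,
      Real.exp_nat_mul, Real.exp_log hx]

lemma relEnt_eq {M : ℝ} (hM : 0 < M) (P U : B → ℝ) (hU : ∀ y, U y = M⁻¹) :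
    relEnt P U = (∑ w, P w * Real.log (P w)) + (∑ w, P w) * Real.log M := by
  rw [relEnt, Finset.sum_mul, ← Finset.sum_add_distrib]
  refine Finset.sum_congr rfl fun w _ => ?_
  rw [hU, div_eq_mul_inv, inv_inv]
  rcases eq_or_ne (P w) 0 with h | h
  · simp [h]
  · rw [Real.log_mul h hM.ne', mul_add]

open Fin.NatCast in
lemma card_image_cnt_le (ℓ : ℕ) (s : Finset (Fin ℓ → B)) :
    (s.image (cnt ℓ)).card ≤ (ℓ + 1) ^ (Fintype.card B) := by
  classical
  have h : (s.image (cnt ℓ)).card ≤ (Finset.univ : Finset (B → Fin (ℓ+1))).card := by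
    refine Finset.card_le_card_of_injOn (fun c w => ((c w : ℕ) : Fin (ℓ+1)))
      (fun c _ => Finset.mem_univ _) ?_
    intro c hc c' hc' h
    obtain ⟨z, _, rfl⟩ := Finset.mem_image.mp (Finset.mem_coe.mp hc)
    obtain ⟨z', _, rfl⟩ := Finset.mem_image.mp (Finset.mem_coe.mp hc')
    funext w
    have h1 := congrArg Fin.val (congrFun h w)
    rw [Fin.val_natCast, Fin.val_natCast] at h1
    rwa [Nat.mod_eq_of_lt (Nat.lt_succ_of_le (cnt_le ℓ z w)),
      Nat.mod_eq_of_lt (Nat.lt_succ_of_le (cnt_le ℓ z' w))] at h1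
  simpa [Finset.card_univ] using h

end CVHelp

open CVHelp Finset

/-- for `Z_1,…,Z_ℓ` i.i.d. uniform on `A^k` and any set `E` of
distributions on `A^k` containing an `ℓ`-type `W₀` with `D(W₀‖U_k) ≤ D₀ + δ`,
the conditional probability that `D(P̂_{Z_1^ℓ}‖U_k) > D₀ + 2δ` given
`P̂_{Z_1^ℓ} ∈ E` is at most `(ℓ+1)^{2m^k} e^{−ℓδ}`. Probabilities under the
uniform law on `(A^k)^ℓ` are ratios of cardinalities. -/
theorem conditional_divergence_tail_bound {A : Type*} [Fintype A] [Nonempty A]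
    (k ℓ : ℕ) (hℓ : 0 < ℓ)
    (E : Set ((Fin k → A) → ℝ)) (D₀ δ : ℝ) (hδ : 0 < δ)
    (U : (Fin k → A) → ℝ) (hU : ∀ y, U y = ((Fintype.card A : ℝ) ^ k)⁻¹)
    (W₀ : (Fin k → A) → ℝ) (hW₀E : W₀ ∈ E)
    (hW₀type : ∀ w, ∃ j : ℕ, W₀ w = (j : ℝ) / ℓ)
    (hW₀0 : ∀ w, 0 ≤ W₀ w) (hW₀1 : (∑ w, W₀ w) = 1)
    (hW₀D : relEnt W₀ U ≤ D₀ + δ) :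
    ((Finset.univ.filter (fun z : Fin ℓ → (Fin k → A) =>
        empPMF ℓ z ∈ E ∧ D₀ + 2 * δ < relEnt (empPMF ℓ z) U)).card : ℝ)
      / ((Finset.univ.filter (fun z : Fin ℓ → (Fin k → A) =>
        empPMF ℓ z ∈ E)).card : ℝ)
      ≤ (ℓ + 1 : ℝ) ^ (2 * Fintype.card A ^ k) * Real.exp (-(ℓ : ℝ) * δ) := by
  classical
  choose c₀ hc₀ using hW₀type
  have hℓR : (0:ℝ) < (ℓ : ℝ) := Nat.cast_pos.mpr hℓ
  -- the counts of W₀ sum to ℓ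
  have hsumc₀ : ∑ w, c₀ w = ℓ := by
    have h' : ∑ w, ((c₀ w : ℝ) / ℓ) = 1 := by
      rw [← hW₀1]; exact Finset.sum_congr rfl fun w _ => (hc₀ w).symm
    rw [← Finset.sum_div, div_eq_one_iff_eq hℓR.ne'] at h'
    exact_mod_cast h'
  -- basic quantities
  set m := Fintype.card A ^ k with hm
  have hcardB : Fintype.card (Fin k → A) = m := by
    simp [hm, Fintype.card_fun]
  set M : ℝ := (Fintype.card A : ℝ) ^ k with hM
  have hMpos : 0 < M := by
    have : (0:ℝ) < (Fintype.card A : ℝ) := Nat.cast_pos.mpr Fintype.card_pos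
    positivity
  have hrelE : ∀ P : (Fin k → A) → ℝ,
      relEnt P U = (∑ w, P w * Real.log (P w)) + (∑ w, P w) * Real.log M :=
    fun P => relEnt_eq hMpos P U (fun y => hU y)
  set SW : ℝ := ∑ w, W₀ w * Real.log (W₀ w) with hSW
  have hSWle : SW + Real.log M ≤ D₀ + δ := by
    have := hW₀D
    rw [hrelE W₀, hW₀1, one_mul] at this
    exact this
  -- empirical pmf is counts over ℓ
  have hemp : ∀ z : Fin ℓ → (Fin k → A), ∀ w, empPMF ℓ z w = (cnt ℓ z w : ℝ) / ℓ :=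
    fun z w => rfl
  have hempsum : ∀ z : Fin ℓ → (Fin k → A), ∑ w, empPMF ℓ z w = 1 := by
    intro z
    rw [Finset.sum_congr rfl (fun w _ => hemp z w), ← Finset.sum_div]
    rw [show ∑ w, ((cnt ℓ z w : ℝ)) = ((∑ w, cnt ℓ z w : ℕ) : ℝ) by push_cast; ring,
      sum_cnt]
    exact div_self hℓR.ne'
  set T : ℝ := (ℓ : ℝ) + 1 with hT
  have hT1 : (1:ℝ) ≤ T := by rw [hT]; nlinarith
  have hT0 : (0:ℝ) < T := lt_of_lt_of_le one_pos hT1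
  -- the weight of c₀
  have hwc₀ : ∏ w, ((c₀ w : ℝ)/ℓ) ^ (c₀ w) = Real.exp ((ℓ:ℝ) * SW) := by
    rw [weight_eq_exp hℓ c₀, hSW]
    congr 1
    refine congrArg _ (Finset.sum_congr rfl fun w _ => ?_)
    rw [hc₀ w]
  -- the denominator filter and numerator filter
  set EF := Finset.univ.filter (fun z : Fin ℓ → (Fin k → A) => empPMF ℓ z ∈ E) with hEF
  set BF := Finset.univ.filter (fun z : Fin ℓ → (Fin k → A) =>
      empPMF ℓ z ∈ E ∧ D₀ + 2 * δ < relEnt (empPMF ℓ z) U) with hBF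
  -- the type class of c₀ sits inside EF
  have hsubEF : typeCls ℓ c₀ ⊆ EF := by
    intro z hz
    have hcz : cnt ℓ z = c₀ := by simpa [typeCls] using (Finset.mem_filter.mp hz).2
    have hPz : empPMF ℓ z = W₀ := by
      funext w; rw [hemp z w, hcz, ← hc₀ w]
    rw [hEF, Finset.mem_filter]
    exact ⟨Finset.mem_univ z, by rw [hPz]; exact hW₀E⟩
  have hSc₀pos : 0 < (typeCls ℓ c₀).card := by
    obtain ⟨z, hz⟩ := exists_string c₀ hsumc₀
    exact Finset.card_pos.mpr ⟨z, by simpa [typeCls] using hz⟩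
  have hEFpos : (0:ℝ) < (EF.card : ℝ) := by
    exact_mod_cast lt_of_lt_of_le hSc₀pos (Finset.card_le_card hsubEF)
  -- Lower bound for the denominator class
  have hLB : (1:ℝ) ≤ T ^ m * (((typeCls ℓ c₀).card : ℝ) * Real.exp ((ℓ:ℝ) * SW)) := by
    have hone : ∑ z : Fin ℓ → (Fin k → A), ∏ t, W₀ (z t) = 1 := sum_prod_eq_one W₀ hW₀1
    have hpart : ∑ z : Fin ℓ → (Fin k → A), ∏ t, W₀ (z t)
        = ∑ c ∈ ((Finset.univ : Finset (Fin ℓ → (Fin k → A))).image (cnt ℓ)),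
            ((typeCls ℓ c).card : ℝ) * ∏ w, W₀ w ^ c w := by
      rw [← Finset.sum_fiberwise_of_maps_to (g := cnt ℓ)
        (fun z _ => Finset.mem_image_of_mem _ (Finset.mem_univ z))
        (fun z => ∏ t, W₀ (z t))]
      refine Finset.sum_congr rfl fun c hc => ?_
      rw [Finset.sum_congr rfl (fun z hz => by
        rw [prod_comp_cnt ℓ z W₀, (Finset.mem_filter.mp hz).2]),
        Finset.sum_const, nsmul_eq_mul]
      rfl
    have hterm : ∀ c ∈ ((Finset.univ : Finset (Fin ℓ → (Fin k → A))).image (cnt ℓ)),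
        ((typeCls ℓ c).card : ℝ) * ∏ w, W₀ w ^ c w
          ≤ ((typeCls ℓ c₀).card : ℝ) * Real.exp ((ℓ:ℝ) * SW) := by
      intro c hc
      obtain ⟨z, _, rfl⟩ := Finset.mem_image.mp hc
      have h1 : ∏ w, W₀ w ^ (cnt ℓ z w) = ∏ w, ((c₀ w : ℝ)/ℓ) ^ (cnt ℓ z w) :=
        Finset.prod_congr rfl fun w _ => by rw [hc₀ w]
      rw [h1, ← hwc₀]
      exact typeCls_weighted_max hℓ (sum_cnt ℓ z) hsumc₀
    have himg : (((Finset.univ : Finset (Fin ℓ → (Fin k → A))).image (cnt ℓ)).card : ℝ)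
        ≤ T ^ m := by
      have := card_image_cnt_le ℓ (Finset.univ : Finset (Fin ℓ → (Fin k → A)))
      rw [hcardB] at this
      calc (((Finset.univ : Finset (Fin ℓ → (Fin k → A))).image (cnt ℓ)).card : ℝ)
          ≤ (((ℓ+1) ^ m : ℕ) : ℝ) := by exact_mod_cast this
        _ = T ^ m := by push_cast [hT]; ring
    have hbnd0 : (0:ℝ) ≤ ((typeCls ℓ c₀).card : ℝ) * Real.exp ((ℓ:ℝ) * SW) := by positivity
    calc (1:ℝ) = ∑ z : Fin ℓ → (Fin k → A), ∏ t, W₀ (z t) := hone.symm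
      _ = ∑ c ∈ ((Finset.univ : Finset (Fin ℓ → (Fin k → A))).image (cnt ℓ)),
            ((typeCls ℓ c).card : ℝ) * ∏ w, W₀ w ^ c w := hpart
      _ ≤ ∑ _c ∈ ((Finset.univ : Finset (Fin ℓ → (Fin k → A))).image (cnt ℓ)),
            ((typeCls ℓ c₀).card : ℝ) * Real.exp ((ℓ:ℝ) * SW) :=
          Finset.sum_le_sum hterm
      _ = (((Finset.univ : Finset (Fin ℓ → (Fin k → A))).image (cnt ℓ)).card : ℝ)
            * (((typeCls ℓ c₀).card : ℝ) * Real.exp ((ℓ:ℝ) * SW)) := by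
          rw [Finset.sum_const, nsmul_eq_mul]
      _ ≤ T ^ m * (((typeCls ℓ c₀).card : ℝ) * Real.exp ((ℓ:ℝ) * SW)) :=
          mul_le_mul_of_nonneg_right himg hbnd0
  -- Upper bound for the numerator
  have hNB : (BF.card : ℝ) ≤ T ^ m * Real.exp (-(ℓ:ℝ) * (SW + δ)) := by
    have hpartN0 : BF.card
        = ∑ c ∈ BF.image (cnt ℓ), (BF.filter (fun z => cnt ℓ z = c)).card :=
      Finset.card_eq_sum_card_fiberwise (fun z hz => Finset.mem_image_of_mem _ hz)
    have hpartN : (BF.card : ℝ)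
        = ∑ c ∈ BF.image (cnt ℓ), ((BF.filter (fun z => cnt ℓ z = c)).card : ℝ) := by
      rw [hpartN0]; push_cast; rfl
    have htermN : ∀ c ∈ BF.image (cnt ℓ),
        ((BF.filter (fun z => cnt ℓ z = c)).card : ℝ) ≤ Real.exp (-(ℓ:ℝ) * (SW + δ)) := by
      intro c hc
      obtain ⟨z, hzBF, rfl⟩ := Finset.mem_image.mp hc
      have hzbad : D₀ + 2 * δ < relEnt (empPMF ℓ z) U :=
        ((Finset.mem_filter.mp hzBF).2).2
      set SP : ℝ := ∑ w, ((cnt ℓ z w : ℝ)/ℓ) * Real.log ((cnt ℓ z w : ℝ)/ℓ) with hSP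
      have hSPemp : ∑ w, empPMF ℓ z w * Real.log (empPMF ℓ z w) = SP := by
        exact Finset.sum_congr rfl fun w _ => by rw [hemp z w]
      have hSPgt : SW + δ < SP := by
        have := hzbad
        rw [hrelE (empPMF ℓ z), hempsum z, one_mul, hSPemp] at this
        linarith
      have hcard_le : ((BF.filter (fun z' => cnt ℓ z' = cnt ℓ z)).card : ℝ)
          ≤ ((typeCls ℓ (cnt ℓ z)).card : ℝ) := by
        exact_mod_cast Finset.card_le_card
          (Finset.filter_subset_filter _ (Finset.subset_univ BF))
      have hub := typeCls_mul_weight_le_one (c := cnt ℓ z) hℓ (sum_cnt ℓ z)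
      rw [weight_eq_exp hℓ (cnt ℓ z), ← hSP] at hub
      have hclass : ((typeCls ℓ (cnt ℓ z)).card : ℝ) ≤ Real.exp (-(ℓ:ℝ) * SP) := by
        have hpos : (0:ℝ) < Real.exp ((ℓ:ℝ) * SP) := Real.exp_pos _
        have h2 : ((typeCls ℓ (cnt ℓ z)).card : ℝ) ≤ 1 / Real.exp ((ℓ:ℝ) * SP) :=
          (le_div_iff₀ hpos).mpr hub
        rw [neg_mul]
        rwa [one_div, ← Real.exp_neg] at h2
      calc ((BF.filter (fun z' => cnt ℓ z' = cnt ℓ z)).card : ℝ)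
          ≤ ((typeCls ℓ (cnt ℓ z)).card : ℝ) := hcard_le
        _ ≤ Real.exp (-(ℓ:ℝ) * SP) := hclass
        _ ≤ Real.exp (-(ℓ:ℝ) * (SW + δ)) := by
            apply Real.exp_le_exp.mpr
            nlinarith [hSPgt, hℓR]
    calc (BF.card : ℝ)
        = ∑ c ∈ BF.image (cnt ℓ), ((BF.filter (fun z => cnt ℓ z = c)).card : ℝ) := hpartN
      _ ≤ ∑ _c ∈ BF.image (cnt ℓ), Real.exp (-(ℓ:ℝ) * (SW + δ)) :=
          Finset.sum_le_sum htermN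
      _ = ((BF.image (cnt ℓ)).card : ℝ) * Real.exp (-(ℓ:ℝ) * (SW + δ)) := by
          rw [Finset.sum_const, nsmul_eq_mul]
      _ ≤ T ^ m * Real.exp (-(ℓ:ℝ) * (SW + δ)) := by
          refine mul_le_mul_of_nonneg_right ?_ (Real.exp_nonneg _)
          have := card_image_cnt_le ℓ BF
          rw [hcardB] at this
          calc ((BF.image (cnt ℓ)).card : ℝ) ≤ (((ℓ+1) ^ m : ℕ) : ℝ) := by exact_mod_cast this
            _ = T ^ m := by push_cast [hT]; ring
  -- assemble
  rw [div_le_iff₀ hEFpos]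
  have hexp : Real.exp (-(ℓ:ℝ) * (SW + δ))
      = Real.exp (-(ℓ:ℝ) * SW) * Real.exp (-(ℓ:ℝ) * δ) := by
    rw [← Real.exp_add]; ring_nf
  have hdenLB : Real.exp (-(ℓ:ℝ) * SW) ≤ T ^ m * ((typeCls ℓ c₀).card : ℝ) := by
    have h := mul_le_mul_of_nonneg_left hLB (Real.exp_nonneg (-(ℓ:ℝ) * SW))
    rw [mul_one] at h
    calc Real.exp (-(ℓ:ℝ) * SW)
        ≤ Real.exp (-(ℓ:ℝ) * SW) * (T ^ m * (((typeCls ℓ c₀).card : ℝ)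
            * Real.exp ((ℓ:ℝ) * SW))) := h
      _ = T ^ m * ((typeCls ℓ c₀).card : ℝ)
            * (Real.exp (-(ℓ:ℝ) * SW) * Real.exp ((ℓ:ℝ) * SW)) := by ring
      _ = T ^ m * ((typeCls ℓ c₀).card : ℝ) := by
          rw [← Real.exp_add]; simp
  have hstep : (BF.card : ℝ) ≤ T ^ (2*m) * Real.exp (-(ℓ:ℝ) * δ)
      * ((typeCls ℓ c₀).card : ℝ) := by
    calc (BF.card : ℝ) ≤ T ^ m * Real.exp (-(ℓ:ℝ) * (SW + δ)) := hNB
      _ = T ^ m * Real.exp (-(ℓ:ℝ) * SW) * Real.exp (-(ℓ:ℝ) * δ) := by rw [hexp]; ring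
      _ ≤ T ^ m * (T ^ m * ((typeCls ℓ c₀).card : ℝ)) * Real.exp (-(ℓ:ℝ) * δ) := by
          refine mul_le_mul_of_nonneg_right ?_ (Real.exp_nonneg _)
          exact mul_le_mul_of_nonneg_left hdenLB (by positivity)
      _ = T ^ (2*m) * Real.exp (-(ℓ:ℝ) * δ) * ((typeCls ℓ c₀).card : ℝ) := by
          rw [show 2*m = m + m by ring, pow_add]; ring
  calc (BF.card : ℝ)
      ≤ T ^ (2*m) * Real.exp (-(ℓ:ℝ) * δ) * ((typeCls ℓ c₀).card : ℝ) := hstep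
    _ ≤ T ^ (2*m) * Real.exp (-(ℓ:ℝ) * δ) * (EF.card : ℝ) := by
        refine mul_le_mul_of_nonneg_left ?_ (by positivity)
        exact_mod_cast Finset.card_le_card hsubEF
end

section
/- If (X_1,...,X_n) is exchangeable over finite A, n = kℓ, then for every a_1^k ∈ A^k, P(X_1^k = a_1^k) = ∫ E[P̂_{Z_1^ℓ}(a_1^k) | P̂_{Z_1^ℓ} ∈ E_k(Q)] dμ(Q), where Z_1,...,Z_ℓ are i.i.d. uniform on A^k, μ is the law of P̂_{X_1^n}, and E_k(Q) is the set of PMFs on A^k whose marginals average to Q. -/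
open scoped Classical BigOperators

/-- The `j`-th one-dimensional marginal of a distribution `W` on `A^k`. -/
noncomputable def marginal {A : Type*} [Fintype A] (k : ℕ) (W : (Fin k → A) → ℝ)
    (j : Fin k) (a : A) : ℝ :=
  ∑ y : Fin k → A, if y j = a then W y else 0

/-- Number of occurrences of the letter `b` in the string `f`. -/
noncomputable def cnt {ι A : Type*} [Fintype ι] (f : ι → A) (b : A) : ℕ :=
  (Finset.univ.filter (fun i => f i = b)).card

lemma cnt_comp_equiv {ι κ A : Type*} [Fintype ι] [Fintype κ] (e : ι ≃ κ) (f : κ → A) (b : A) :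
    cnt (f ∘ e) b = cnt f b := by
  simp only [cnt, ← Fintype.card_subtype]
  exact Fintype.card_congr (e.subtypeEquiv fun i => by simp)

lemma exists_comp_perm {ι A : Type*} [Fintype ι] (f g : ι → A)
    (h : ∀ b, cnt f b = cnt g b) : ∃ π : Equiv.Perm ι, g ∘ π = f := by
  have he : ∀ b, {i // f i = b} ≃ {i // g i = b} := fun b =>
    Fintype.equivOfCardEq (by
      have := h b
      simp only [cnt] at this
      simpa [Fintype.card_subtype] using this)
  refine ⟨(Equiv.sigmaFiberEquiv f).symm.trans
    ((Equiv.sigmaCongrRight he).trans (Equiv.sigmaFiberEquiv g)), ?_⟩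
  funext i
  simp only [Function.comp_apply, Equiv.trans_apply, Equiv.sigmaFiberEquiv,
    Equiv.sigmaCongrRight, Equiv.coe_fn_symm_mk, Equiv.coe_fn_mk]
  exact (he (f i) ⟨i, rfl⟩).2

/-- for exchangeable `(X_1,…,X_n)` with `n = kℓ`,
`P(X_1^k = a_1^k) = ∫ E[P̂_{Z_1^ℓ}(a_1^k) | P̂_{Z_1^ℓ} ∈ E_k(Q)] dμ(Q)`,
where `Z_1,…,Z_ℓ` are i.i.d. uniform on `A^k`, `μ` is the law of `P̂_{X_1^n}`,
and `E_k(Q)` is the set of PMFs on `A^k` whose marginals average to `Q`. The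
integral over `μ` is the expectation over `Q = P̂_{X_1^n}`, and conditional
expectations under the uniform law are ratios of sums over `(A^k)^ℓ`. -/
theorem exchangeable_first_block_mixture_identity {A : Type*} [Fintype A]
    (k ℓ : ℕ) (hk : 1 ≤ k) (hℓ : 1 ≤ ℓ) (hkl : k ≤ k * ℓ)
    (p : (Fin (k * ℓ) → A) → ℝ) (hp0 : ∀ x, 0 ≤ p x) (hp1 : (∑ x, p x) = 1)
    (hexch : ∀ (π : Equiv.Perm (Fin (k * ℓ))) (x : Fin (k * ℓ) → A), p (x ∘ π) = p x)
    (a : Fin k → A) :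
    (∑ x, if (∀ i : Fin k, x (Fin.castLE hkl i) = a i) then p x else 0)
      = ∑ x, p x *
          ((∑ z : Fin ℓ → (Fin k → A),
              if (∀ b : A, (∑ j : Fin k, marginal k (empPMF ℓ z) j b) / k
                    = empPMF (k * ℓ) x b)
              then empPMF ℓ z a else 0)
            / ((Finset.univ.filter (fun z : Fin ℓ → (Fin k → A) =>
                ∀ b : A, (∑ j : Fin k, marginal k (empPMF ℓ z) j b) / k
                  = empPMF (k * ℓ) x b)).card : ℝ)) := by
  have hkR : (k : ℝ) ≠ 0 := Nat.cast_ne_zero.2 (by omega)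
  have hlR : (ℓ : ℝ) ≠ 0 := Nat.cast_ne_zero.2 (by omega)
  set t0 : Fin ℓ := ⟨0, hℓ⟩ with ht0
  set e : Fin ℓ × Fin k ≃ Fin (k * ℓ) := finProdFinEquiv.trans (finCongr (mul_comm ℓ k)) with he
  set F : (Fin ℓ → Fin k → A) ≃ (Fin (k * ℓ) → A) :=
    (Equiv.curry (Fin ℓ) (Fin k) A).symm.trans (Equiv.arrowCongr e (Equiv.refl A)) with hFdef
  -- count of flattened string
  have hcntF : ∀ (z : Fin ℓ → Fin k → A) (b : A), cnt (F z) b = ∑ t, cnt (z t) b := by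
    intro z b
    have h1 : (F z) ∘ e = fun q : Fin ℓ × Fin k => z q.1 q.2 := by
      funext q
      show F z (e q) = _
      have : F z (e q) = z (e.symm (e q)).1 (e.symm (e q)).2 := rfl
      rw [this, Equiv.symm_apply_apply]
    rw [← cnt_comp_equiv e (F z) b, h1]
    simp only [cnt, Finset.card_filter, Fintype.sum_prod_type]
  -- first block of the flattened string
  have hFirst : ∀ (z : Fin ℓ → Fin k → A) (i : Fin k), F z (Fin.castLE hkl i) = z t0 i := by
    intro z i
    have h2 : e (t0, i) = Fin.castLE hkl i := by
      simp only [he, Equiv.trans_apply, finCongr_apply, Fin.ext_iff, Fin.coe_cast,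
        finProdFinEquiv, Equiv.coe_fn_mk, Fin.coe_castLE, ht0]
      simp
    have : F z (Fin.castLE hkl i) = z (e.symm (Fin.castLE hkl i)).1 (e.symm (Fin.castLE hkl i)).2 := rfl
    rw [this, ← h2, Equiv.symm_apply_apply]
  -- rewriting the conditioning event in terms of letter counts
  have hcond : ∀ (z : Fin ℓ → Fin k → A) (x : Fin (k * ℓ) → A),
      (∀ b : A, (∑ j : Fin k, marginal k (empPMF ℓ z) j b) / k = empPMF (k * ℓ) x b)
        ↔ (∀ b : A, (∑ t, cnt (z t) b) = cnt x b) := by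
    intro z x
    have hmar : ∀ (j : Fin k) (b : A), marginal k (empPMF ℓ z) j b
        = ((Finset.univ.filter (fun t : Fin ℓ => z t j = b)).card : ℝ) / ℓ := by
      intro j b
      have key : (∑ y : Fin k → A, if y j = b then ((Finset.univ.filter fun t => z t = y).card) else 0)
          = (Finset.univ.filter (fun t : Fin ℓ => z t j = b)).card := by
        simp only [Finset.card_filter]
        have step : ∀ y : Fin k → A,
            (if y j = b then (∑ t, if z t = y then 1 else 0) else 0)
              = ∑ t : Fin ℓ, if z t = y then (if y j = b then 1 else 0) else 0 := by
          intro y; split_ifs with h <;> simp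
        simp only [step]
        rw [Finset.sum_comm]
        refine Finset.sum_congr rfl fun t _ => ?_
        rw [Finset.sum_ite_eq Finset.univ (z t) (fun y => if y j = b then 1 else 0)]
        simp
      calc marginal k (empPMF ℓ z) j b
          = (∑ y : Fin k → A, if y j = b then ((Finset.univ.filter fun t => z t = y).card : ℝ) else 0) / ℓ := by
            simp only [marginal, empPMF, Finset.sum_div]
            refine Finset.sum_congr rfl fun y _ => ?_
            split_ifs with h
            · rw [Finset.filter_congr_decidable]
            · simp
        _ = _ := by congr 1; rw [← key]; push_cast; rfl
    have hsum : ∀ b : A, (∑ j : Fin k, marginal k (empPMF ℓ z) j b)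
        = ((∑ t, cnt (z t) b : ℕ) : ℝ) / ℓ := by
      intro b
      have : (∑ j : Fin k, ((Finset.univ.filter (fun t : Fin ℓ => z t j = b)).card : ℕ))
          = ∑ t, cnt (z t) b := by
        simp only [cnt, Finset.card_filter]
        rw [Finset.sum_comm]
      simp only [hmar, ← Finset.sum_div]
      rw [← Nat.cast_sum, this]
    constructor
    · intro h b
      have hb := h b
      rw [hsum b] at hb
      simp only [empPMF] at hb
      have : ((∑ t, cnt (z t) b : ℕ) : ℝ) = ((cnt x b : ℕ) : ℝ) := by
        simp only [cnt]
        field_simp at hb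
        push_cast at hb ⊢
        rw [mul_comm (ℓ:ℝ) (k:ℝ)] at hb
        exact mul_right_cancel₀ (mul_ne_zero hkR hlR) (hb.trans (mul_comm _ _))
      exact_mod_cast this
    · intro h b
      rw [hsum b, h b]
      simp only [empPMF, cnt]
      push_cast
      rw [div_div]
      ring_nf
  -- the set of `z`'s compatible with `x`
  set S : (Fin (k * ℓ) → A) → Finset (Fin ℓ → Fin k → A) :=
    fun x => Finset.univ.filter (fun z => ∀ b : A, (∑ t, cnt (z t) b) = cnt x b) with hS
  set N : (Fin (k * ℓ) → A) → ℕ := fun x => ((S x).filter (fun z => z t0 = a)).card with hN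
  -- the conditioning filter is S x
  have hfilt : ∀ x : Fin (k * ℓ) → A,
      (Finset.univ.filter (fun z : Fin ℓ → (Fin k → A) =>
          ∀ b : A, (∑ j : Fin k, marginal k (empPMF ℓ z) j b) / k = empPMF (k * ℓ) x b)) = S x := by
    intro x
    rw [hS]
    exact Finset.filter_congr (fun z _ => hcond z x)
  -- swap-invariance of S x
  have hswap : ∀ (x : Fin (k * ℓ) → A) (σ : Equiv.Perm (Fin ℓ)) (z : Fin ℓ → Fin k → A),
      z ∈ S x → z ∘ σ ∈ S x := by
    intro x σ z hz
    simp only [hS, Finset.mem_filter, Finset.mem_univ, true_and] at hz ⊢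
    intro b
    rw [← hz b]
    exact Equiv.sum_comp σ (fun t => cnt (z t) b)
  -- numerator equals N x
  have hNum : ∀ x : Fin (k * ℓ) → A,
      (∑ z : Fin ℓ → (Fin k → A),
          if (∀ b : A, (∑ j : Fin k, marginal k (empPMF ℓ z) j b) / k = empPMF (k * ℓ) x b)
          then empPMF ℓ z a else 0) = (N x : ℝ) := by
    intro x
    have h1 : (∑ z : Fin ℓ → (Fin k → A),
        if (∀ b : A, (∑ j : Fin k, marginal k (empPMF ℓ z) j b) / k = empPMF (k * ℓ) x b)
        then empPMF ℓ z a else 0) = ∑ z ∈ S x, empPMF ℓ z a := by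
      rw [← hfilt x, Finset.sum_filter]
    have hcard : (∑ z ∈ S x, (Finset.univ.filter (fun t : Fin ℓ => z t = a)).card) = ℓ * N x := by
      have h2 : ∀ z : Fin ℓ → Fin k → A,
          (Finset.univ.filter (fun t : Fin ℓ => z t = a)).card = ∑ t, if z t = a then 1 else 0 :=
        fun z => Finset.card_filter _ _
      simp only [h2]
      rw [Finset.sum_comm]
      have h3 : ∀ t : Fin ℓ, (∑ z ∈ S x, if z t = a then 1 else 0) = N x := by
        intro t
        rw [← Finset.card_filter, hN]
        refine Finset.card_bij' (fun z _ => z ∘ (Equiv.swap t0 t)) (fun z _ => z ∘ (Equiv.swap t0 t))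
          ?_ ?_ ?_ ?_
        · intro z hz
          simp only [Finset.mem_filter] at hz ⊢
          refine ⟨hswap x _ z hz.1, ?_⟩
          show z (Equiv.swap t0 t t0) = a
          rw [Equiv.swap_apply_left]
          exact hz.2
        · intro z hz
          simp only [Finset.mem_filter] at hz ⊢
          refine ⟨hswap x _ z hz.1, ?_⟩
          show z (Equiv.swap t0 t t) = a
          rw [Equiv.swap_apply_right]
          exact hz.2
        · intro z _
          funext s
          simp [Equiv.swap_apply_self]
        · intro z _
          funext s
          simp [Equiv.swap_apply_self]
      rw [Finset.sum_congr rfl (fun t _ => h3 t), Finset.sum_const, Finset.card_univ,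
        Fintype.card_fin, smul_eq_mul]
    rw [h1]
    have : (∑ z ∈ S x, empPMF ℓ z a) = ((∑ z ∈ S x, (Finset.univ.filter (fun t : Fin ℓ => z t = a)).card : ℕ) : ℝ) / ℓ := by
      simp only [empPMF, ← Finset.sum_div]
      rw [Nat.cast_sum]
      congr!
    rw [this, hcard]
    push_cast
    field_simp
  -- inner double-counting identity
  have hinner : ∀ z : Fin ℓ → Fin k → A,
      (∑ x : Fin (k * ℓ) → A,
        if (∀ b : A, (∑ t, cnt (z t) b) = cnt x b) then p x / ((S x).card : ℝ) else 0) = p (F z) := by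
    intro z
    have hw' : ∀ b, (∑ t, cnt (z t) b) = cnt (F z) b := fun b => (hcntF z b).symm
    have hpx : ∀ x : Fin (k * ℓ) → A, (∀ b, (∑ t, cnt (z t) b) = cnt x b) → p x = p (F z) := by
      intro x hx
      obtain ⟨π, hπ⟩ := exists_comp_perm (F z) x (fun b => by rw [← hw' b, hx b])
      rw [← hπ, hexch]
    have hSx : ∀ x : Fin (k * ℓ) → A, (∀ b, (∑ t, cnt (z t) b) = cnt x b) → S x = S (F z) := by
      intro x hx
      simp only [hS]
      refine Finset.filter_congr (fun z' _ => ?_)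
      have hxb : ∀ b, cnt x b = cnt (F z) b := fun b => by rw [← hx b, hw' b]
      constructor
      · intro h b; rw [← hxb b]; exact h b
      · intro h b; rw [hxb b]; exact h b
    have hM : (Finset.univ.filter (fun x : Fin (k * ℓ) → A =>
        ∀ b, (∑ t, cnt (z t) b) = cnt x b)).card = (S (F z)).card := by
      refine Finset.card_bij' (fun x _ => F.symm x) (fun z' _ => F z') ?_ ?_ ?_ ?_
      · intro x hx
        simp only [Finset.mem_filter, Finset.mem_univ, true_and] at hx
        simp only [hS, Finset.mem_filter, Finset.mem_univ, true_and]
        intro b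
        rw [← hcntF (F.symm x) b, Equiv.apply_symm_apply, ← hx b, hw' b]
      · intro z' hz'
        simp only [hS, Finset.mem_filter, Finset.mem_univ, true_and] at hz'
        simp only [Finset.mem_filter, Finset.mem_univ, true_and]
        intro b
        rw [hcntF z' b, hz' b]
        exact hw' b
      · intro x _; exact F.apply_symm_apply x
      · intro z' _; exact F.symm_apply_apply z'
    have hrw : ∀ x : Fin (k * ℓ) → A,
        (if (∀ b, (∑ t, cnt (z t) b) = cnt x b) then p x / ((S x).card : ℝ) else 0)
          = (if (∀ b, (∑ t, cnt (z t) b) = cnt x b) then p (F z) / ((S (F z)).card : ℝ) else 0) := by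
      intro x; split_ifs with h
      · rw [hpx x h, hSx x h]
      · rfl
    simp only [hrw]
    rw [← Finset.sum_filter, Finset.sum_const, hM, nsmul_eq_mul]
    have hpos : (0:ℕ) < (S (F z)).card := Finset.card_pos.2 ⟨z, by
      simp only [hS, Finset.mem_filter, Finset.mem_univ, true_and]; exact hw'⟩
    have hD : ((S (F z)).card : ℝ) ≠ 0 := Nat.cast_ne_zero.2 hpos.ne'
    field_simp
  -- final assembly
  have step1 : (∑ x, if (∀ i : Fin k, x (Fin.castLE hkl i) = a i) then p x else 0)
      = ∑ z : Fin ℓ → Fin k → A, (if z t0 = a then p (F z) else 0) := by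
    rw [← Equiv.sum_comp F (fun x => if (∀ i : Fin k, x (Fin.castLE hkl i) = a i) then p x else 0)]
    refine Finset.sum_congr rfl fun z _ => ?_
    refine if_congr ?_ rfl rfl
    constructor
    · intro h; funext i; rw [← hFirst z i]; exact h i
    · intro h i; rw [hFirst z i, h]
  rw [step1]
  symm
  have step2 : ∀ x : Fin (k * ℓ) → A,
      p x * ((∑ z : Fin ℓ → (Fin k → A),
          if (∀ b : A, (∑ j : Fin k, marginal k (empPMF ℓ z) j b) / k = empPMF (k * ℓ) x b)
          then empPMF ℓ z a else 0)
        / ((Finset.univ.filter (fun z : Fin ℓ → (Fin k → A) =>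
            ∀ b : A, (∑ j : Fin k, marginal k (empPMF ℓ z) j b) / k = empPMF (k * ℓ) x b)).card : ℝ))
      = ∑ z : Fin ℓ → Fin k → A,
          if ((∀ b : A, (∑ t, cnt (z t) b) = cnt x b) ∧ z t0 = a)
          then p x / ((S x).card : ℝ) else 0 := by
    intro x
    rw [hNum x, hfilt x]
    have hf2 : Finset.univ.filter (fun z : Fin ℓ → Fin k → A =>
        (∀ b : A, (∑ t, cnt (z t) b) = cnt x b) ∧ z t0 = a) = (S x).filter (fun z => z t0 = a) := by
      rw [hS, Finset.filter_filter]
    rw [← Finset.sum_filter, hf2, Finset.sum_const, nsmul_eq_mul]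
    have hNx : (((S x).filter (fun z => z t0 = a)).card : ℝ) = (N x : ℝ) := by rw [hN]
    rw [hNx]
    ring
  rw [Finset.sum_congr rfl (fun x _ => step2 x), Finset.sum_comm]
  refine Finset.sum_congr rfl fun z _ => ?_
  by_cases hq : z t0 = a
  · rw [if_pos hq, ← hinner z]
    refine Finset.sum_congr rfl fun x _ => ?_
    refine if_congr ?_ rfl rfl
    simp [hq]
  · rw [if_neg hq]
    refine Finset.sum_eq_zero fun x _ => ?_
    rw [if_neg (by tauto)]
end
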